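/- Fix n ≥ 1 and ℓ ≥ 2. Let E = Mₙ(ℂ) × (Mₙ(ℂ) × 𝔫ₙ)^ℓ, where 𝔫ₙ is the space of strictly upper-triangular n×n complex matrices, and let U ⊆ E be the open set of points (X, g₁, Y₁, …, g_ℓ, Y_ℓ) with every gⱼ invertible. For 1 ≤ i ≤ ℓ−1 define W_{i,i+1} : U → ℂ by W_{i,i+1}(X, g₁, Y₁, …, g_ℓ, Y_ℓ) = Tr(X · (gᵢYᵢgᵢ⁻¹ − gᵢ₊₁Yᵢ₊₁gᵢ₊₁⁻¹)). Then for a point p ∈ U the (complex) Fréchet derivatives of all the functions W_{i,i+1} (1 ≤ i ≤ ℓ−1) vanish simultaneously at p if and only if: (a) gᵢYᵢgᵢ⁻¹ = gᵢ₊₁Yᵢ₊₁gᵢ₊₁⁻¹ for all 1 ≤ i ≤ ℓ−1; (b) (gᵢ⁻¹Xgᵢ)₋₋ = 0 for all 1 ≤ i ≤ ℓ; and (c) [X, g₁Y₁g₁⁻¹] = 0. -/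

import Mathlib

attribute [local instance] Matrix.normedAddCommGroup Matrix.normedSpace

noncomputable section

/-- The space `𝔫ₙ` of strictly upper-triangular `n × n` complex matrices, as a submodule
of the space of all matrices. -/
def strictUpperSub (n : ℕ) : Submodule ℂ (Matrix (Fin n) (Fin n) ℂ) where
  carrier := {Y | ∀ i j, j ≤ i → Y i j = 0}
  add_mem' := by
    intro a b ha hb i j h
    show a i j + b i j = 0
    rw [ha i j h, hb i j h, add_zero]
  zero_mem' := fun _ _ _ => rfl
  smul_mem' := by
    intro c a ha i j h
    show c * a i j = 0
    rw [ha i j h, mul_zero]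

/-- The ambient space `E = Mₙ(ℂ) × (Mₙ(ℂ) × 𝔫ₙ)^ℓ` (with `ℓ = ℓ' + 2`). -/
def braidSpace (n ℓ' : ℕ) : Type :=
  Matrix (Fin n) (Fin n) ℂ ×
    (Fin (ℓ' + 2) → Matrix (Fin n) (Fin n) ℂ × (strictUpperSub n))

instance (n ℓ' : ℕ) : NormedAddCommGroup (braidSpace n ℓ') := by
  unfold braidSpace; infer_instance

instance (n ℓ' : ℕ) : NormedSpace ℂ (braidSpace n ℓ') := by
  unfold braidSpace; infer_instance

/-- The intermediate potential
`W_{i,i+1}(X, g₁, Y₁, …) = Tr(X·(gᵢYᵢgᵢ⁻¹ − gᵢ₊₁Yᵢ₊₁gᵢ₊₁⁻¹))`. -/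
def braidPotential (n ℓ' : ℕ) (i : Fin (ℓ' + 1)) (p : braidSpace n ℓ') : ℂ :=
  Matrix.trace (p.1 *
    ((p.2 i.castSucc).1 * ((p.2 i.castSucc).2 : Matrix (Fin n) (Fin n) ℂ) * ((p.2 i.castSucc).1)⁻¹
      - (p.2 i.succ).1 * ((p.2 i.succ).2 : Matrix (Fin n) (Fin n) ℂ) * ((p.2 i.succ).1)⁻¹))

namespace BraidCritical

open Matrix Asymptotics Filter Topology

abbrev Mat (n : ℕ) := Matrix (Fin n) (Fin n) ℂ

variable {n : ℕ}

lemma norm_matmul_le (A B : Mat n) : ‖A * B‖ ≤ (n : ℝ) * ‖A‖ * ‖B‖ := by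
  refine (Matrix.norm_le_iff (by positivity)).mpr fun i j => ?_
  rw [Matrix.mul_apply]
  calc ‖∑ k, A i k * B k j‖ ≤ ∑ k, ‖A i k * B k j‖ := norm_sum_le _ _
    _ ≤ ∑ _k : Fin n, ‖A‖ * ‖B‖ := by
        refine Finset.sum_le_sum fun k _ => ?_
        rw [norm_mul]
        exact mul_le_mul (Matrix.norm_entry_le_entrywise_sup_norm A)
          (Matrix.norm_entry_le_entrywise_sup_norm B) (norm_nonneg _) (norm_nonneg _)
    _ = (n : ℝ) * ‖A‖ * ‖B‖ := by
        simp [Finset.sum_const, Finset.card_univ, mul_assoc]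

/-- Matrix multiplication as a continuous bilinear map (entrywise sup norm). -/
def mulCLM (n : ℕ) : Mat n →L[ℂ] Mat n →L[ℂ] Mat n :=
  LinearMap.toContinuousLinearMap
    { toFun := fun a => LinearMap.toContinuousLinearMap (LinearMap.mulLeft ℂ a)
      map_add' := fun a b => by ext x; simp [add_mul]
      map_smul' := fun c a => by ext x; simp [smul_mul_assoc] }

@[simp] lemma mulCLM_apply (a b : Mat n) : mulCLM n a b = a * b := by
  simp [mulCLM]

/-- The trace as a continuous linear map. -/
def traceCLM (n : ℕ) : Mat n →L[ℂ] ℂ :=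
  LinearMap.toContinuousLinearMap (Matrix.traceLinearMap (Fin n) ℂ ℂ)

@[simp] lemma traceCLM_apply (A : Mat n) : traceCLM n A = Matrix.trace A := by
  simp [traceCLM]

/-- Right multiplication, typed with the matrix instances. -/
def mulR (b : Mat n) : Mat n →L[ℂ] Mat n := (mulCLM n).flip b

@[simp] lemma mulR_apply (a b : Mat n) : mulR b a = a * b := rfl

/-- The derivative of matrix inversion at `g`. -/
def invD (g : Mat n) : Mat n →L[ℂ] Mat n :=
  -(mulR g⁻¹ ∘L mulCLM n g⁻¹)

@[simp] lemma invD_apply (g v : Mat n) : invD g v = -(g⁻¹ * v * g⁻¹) := by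
  simp [invD, mul_assoc]

lemma norm_mul5_le (a b c d e : Mat n) :
    ‖a*b*c*d*e‖ ≤ (n:ℝ)^4 * (‖a‖*‖b‖*‖c‖*‖d‖*‖e‖) := by
  calc ‖a*b*c*d*e‖ ≤ (n:ℝ) * ‖a*b*c*d‖ * ‖e‖ := norm_matmul_le _ _
    _ ≤ (n:ℝ) * ((n:ℝ) * ‖a*b*c‖ * ‖d‖) * ‖e‖ := by gcongr; exact norm_matmul_le _ _
    _ ≤ (n:ℝ) * ((n:ℝ) * ((n:ℝ) * ‖a*b‖ * ‖c‖) * ‖d‖) * ‖e‖ := by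
        gcongr; exact norm_matmul_le _ _
    _ ≤ (n:ℝ) * ((n:ℝ) * ((n:ℝ) * ((n:ℝ) * ‖a‖ * ‖b‖) * ‖c‖) * ‖d‖) * ‖e‖ := by
        gcongr; exact norm_matmul_le _ _
    _ = (n:ℝ)^4 * (‖a‖*‖b‖*‖c‖*‖d‖*‖e‖) := by ring

lemma inv_key_identity (g v : Mat n) (hg : IsUnit g) (hgv : IsUnit (g + v)) :
    (g+v)⁻¹ - g⁻¹ + g⁻¹ * v * g⁻¹ = (g+v)⁻¹ * v * g⁻¹ * v * g⁻¹ := by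
  have h1 : (g+v)⁻¹ * (g+v) = 1 :=
    Matrix.nonsing_inv_mul _ ((Matrix.isUnit_iff_isUnit_det _).mp hgv)
  have h2 : g * g⁻¹ = 1 :=
    Matrix.mul_nonsing_inv _ ((Matrix.isUnit_iff_isUnit_det _).mp hg)
  have e1 : (g+v)⁻¹ * v = 1 - (g+v)⁻¹ * g := by
    rw [eq_sub_iff_add_eq, ← mul_add, add_comm v g, h1]
  have e2 : (g+v)⁻¹ * v * g⁻¹ = g⁻¹ - (g+v)⁻¹ := by
    rw [e1, sub_mul, one_mul, mul_assoc, h2, mul_one]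
  calc (g+v)⁻¹ - g⁻¹ + g⁻¹ * v * g⁻¹
      = g⁻¹*v*g⁻¹ - (g⁻¹ - (g+v)⁻¹) := by abel
    _ = g⁻¹*v*g⁻¹ - (g+v)⁻¹*v*g⁻¹ := by rw [e2]
    _ = (g⁻¹ - (g+v)⁻¹)*v*g⁻¹ := by rw [sub_mul, sub_mul]
    _ = (g+v)⁻¹*v*g⁻¹*v*g⁻¹ := by rw [← e2]

/-- Matrix inversion is differentiable at invertible matrices, with the usual derivative. -/
theorem hasFDerivAt_inv (g : Mat n) (hg : IsUnit g) :
    HasFDerivAt (fun A : Mat n => A⁻¹) (invD g) g := by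
  have hdet' : g.det ≠ 0 := ((Matrix.isUnit_iff_isUnit_det g).mp hg).ne_zero
  have hcont : ContinuousAt (fun A : Mat n => A⁻¹) g := by
    apply continuousAt_matrix_inv
    have hr : (Ring.inverse : ℂ → ℂ) = Inv.inv := funext fun x => Ring.inverse_eq_inv x
    rw [hr]
    exact continuousAt_inv₀ hdet'
  have htend : Tendsto (fun v : Mat n => g + v) (𝓝 0) (𝓝 g) := by
    simpa using (tendsto_const_nhds.add tendsto_id :
      Tendsto (fun v : Mat n => g + v) (𝓝 0) (𝓝 (g + 0)))
  have hev0 : ∀ᶠ v in 𝓝 (0 : Mat n), IsUnit (g + v) := by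
    have hdetc : ContinuousAt Matrix.det g :=
      (Continuous.matrix_det continuous_id).continuousAt
    have hev : ∀ᶠ A in 𝓝 g, IsUnit A := by
      filter_upwards [hdetc.eventually_ne hdet'] with A hA
      exact (Matrix.isUnit_iff_isUnit_det A).mpr (isUnit_iff_ne_zero.mpr hA)
    exact htend.eventually hev
  have hbound : ∀ᶠ v in 𝓝 (0 : Mat n), ‖(g + v)⁻¹‖ < ‖g⁻¹‖ + 1 := by
    have h2 : Tendsto (fun v : Mat n => ‖(g + v)⁻¹‖) (𝓝 0) (𝓝 ‖g⁻¹‖) :=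
      ((hcont.tendsto.comp htend).norm)
    exact h2.eventually (gt_mem_nhds (lt_add_one _))
  refine hasFDerivAt_iff_isLittleO_nhds_zero.mpr ?_
  have hbigO : (fun v : Mat n => (g + v)⁻¹ - g⁻¹ - invD g v)
      =O[𝓝 0] (fun v : Mat n => ‖v‖ * ‖v‖) := by
    rw [isBigO_iff]
    refine ⟨(n:ℝ)^4 * ((‖g⁻¹‖+1) * ‖g⁻¹‖ * ‖g⁻¹‖), ?_⟩
    filter_upwards [hev0, hbound] with v hu hb
    have hid : (g + v)⁻¹ - g⁻¹ - invD g v = (g+v)⁻¹ * v * g⁻¹ * v * g⁻¹ := by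
      rw [invD_apply, sub_neg_eq_add]
      exact inv_key_identity g v hg hu
    rw [hid]
    calc ‖(g+v)⁻¹ * v * g⁻¹ * v * g⁻¹‖
        ≤ (n:ℝ)^4 * (‖(g+v)⁻¹‖*‖v‖*‖g⁻¹‖*‖v‖*‖g⁻¹‖) := norm_mul5_le _ _ _ _ _
      _ ≤ (n:ℝ)^4 * ((‖g⁻¹‖+1)*‖v‖*‖g⁻¹‖*‖v‖*‖g⁻¹‖) := by gcongr
      _ = (n:ℝ)^4 * ((‖g⁻¹‖+1) * ‖g⁻¹‖ * ‖g⁻¹‖) * (‖v‖ * ‖v‖) := by ring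
      _ = (n:ℝ)^4 * ((‖g⁻¹‖+1) * ‖g⁻¹‖ * ‖g⁻¹‖) * ‖‖v‖ * ‖v‖‖ := by
          rw [Real.norm_of_nonneg (by positivity)]
  refine hbigO.trans_isLittleO ?_
  rw [isLittleO_iff]
  intro c hc
  filter_upwards [Metric.ball_mem_nhds (0 : Mat n) hc] with v hv
  rw [mem_ball_zero_iff] at hv
  rw [Real.norm_of_nonneg (by positivity)]
  exact mul_le_mul_of_nonneg_right hv.le (norm_nonneg v)

/-- Leibniz rule for matrix products (entrywise sup norm). -/
theorem _root_.HasFDerivAt.matmul {E : Type*} [NormedAddCommGroup E] [NormedSpace ℂ E]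
    {f g : E → Mat n} {f' g' : E →L[ℂ] Mat n} {x : E}
    (hf : HasFDerivAt f f' x) (hg : HasFDerivAt g g' x) :
    HasFDerivAt (fun y => f y * g y)
      (mulCLM n (f x) ∘L g' + mulR (g x) ∘L f') x := by
  have h : HasFDerivAt (fun y => f y * g y)
      (((mulCLM n).isBoundedBilinearMap.deriv (f x, g x)) ∘L (f'.prod g')) x :=
    by
      have h0 := ((mulCLM n).isBoundedBilinearMap.hasFDerivAt (f x, g x)).comp x (hf.prodMk hg)
      exact h0
  have e : (mulCLM n (f x) ∘L g' + mulR (g x) ∘L f' : E →L[ℂ] Mat n)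
      = ((mulCLM n).isBoundedBilinearMap.deriv (f x, g x)) ∘L (f'.prod g') := by
    ext v
    rfl
  rw [e]
  exact h

variable {ℓ' : ℕ}

def XC (n ℓ' : ℕ) : braidSpace n ℓ' →L[ℂ] Mat n :=
  ContinuousLinearMap.fst ℂ _ _

@[simp] lemma XC_apply (q : braidSpace n ℓ') : XC n ℓ' q = q.1 := rfl

def gC (n ℓ' : ℕ) (j : Fin (ℓ' + 2)) : braidSpace n ℓ' →L[ℂ] Mat n :=
  (ContinuousLinearMap.fst ℂ _ _).comp
    ((ContinuousLinearMap.proj j).comp (ContinuousLinearMap.snd ℂ _ _))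

@[simp] lemma gC_apply (j : Fin (ℓ' + 2)) (q : braidSpace n ℓ') :
    gC n ℓ' j q = (q.2 j).1 := rfl

def yC (n ℓ' : ℕ) (j : Fin (ℓ' + 2)) : braidSpace n ℓ' →L[ℂ] Mat n :=
  ((strictUpperSub n).subtypeL).comp
    ((ContinuousLinearMap.snd ℂ _ _).comp
      ((ContinuousLinearMap.proj j).comp (ContinuousLinearMap.snd ℂ _ _)))

@[simp] lemma yC_apply (j : Fin (ℓ' + 2)) (q : braidSpace n ℓ') :
    yC n ℓ' j q = ((q.2 j).2 : Mat n) := rfl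

theorem braid_key (n ℓ' : ℕ) (p : braidSpace n ℓ')
    (hp : ∀ i : Fin (ℓ' + 2), IsUnit (p.2 i).1) (i : Fin (ℓ' + 1)) :
    ∃ D : braidSpace n ℓ' →L[ℂ] ℂ, HasFDerivAt (braidPotential n ℓ' i) D p ∧
      ∀ v : braidSpace n ℓ',
        D v = Matrix.trace (p.1 *
          (((p.2 i.castSucc).1 * ((p.2 i.castSucc).2 : Mat n) *
              -(((p.2 i.castSucc).1)⁻¹ * (v.2 i.castSucc).1 * ((p.2 i.castSucc).1)⁻¹)
            + ((p.2 i.castSucc).1 * ((v.2 i.castSucc).2 : Mat n)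
                + (v.2 i.castSucc).1 * ((p.2 i.castSucc).2 : Mat n)) * ((p.2 i.castSucc).1)⁻¹)
          - ((p.2 i.succ).1 * ((p.2 i.succ).2 : Mat n) *
              -(((p.2 i.succ).1)⁻¹ * (v.2 i.succ).1 * ((p.2 i.succ).1)⁻¹)
            + ((p.2 i.succ).1 * ((v.2 i.succ).2 : Mat n)
                + (v.2 i.succ).1 * ((p.2 i.succ).2 : Mat n)) * ((p.2 i.succ).1)⁻¹))
          + v.1 *
            ((p.2 i.castSucc).1 * ((p.2 i.castSucc).2 : Mat n) * ((p.2 i.castSucc).1)⁻¹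
              - (p.2 i.succ).1 * ((p.2 i.succ).2 : Mat n) * ((p.2 i.succ).1)⁻¹)) := by
  have hg : ∀ j : Fin (ℓ' + 2),
      HasFDerivAt (fun q : braidSpace n ℓ' => (q.2 j).1) (gC n ℓ' j) p :=
    fun j => (gC n ℓ' j).hasFDerivAt
  have hy : ∀ j : Fin (ℓ' + 2),
      HasFDerivAt (fun q : braidSpace n ℓ' => ((q.2 j).2 : Mat n)) (yC n ℓ' j) p :=
    fun j => (yC n ℓ' j).hasFDerivAt
  have hinv : ∀ j : Fin (ℓ' + 2),
      HasFDerivAt (fun q : braidSpace n ℓ' => ((q.2 j).1)⁻¹)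
        (invD ((p.2 j).1) ∘L gC n ℓ' j) p :=
    fun j => (hasFDerivAt_inv _ (hp j)).comp p (hg j)
  have hA : ∀ j : Fin (ℓ' + 2),
      HasFDerivAt (fun q : braidSpace n ℓ' =>
          (q.2 j).1 * ((q.2 j).2 : Mat n) * ((q.2 j).1)⁻¹)
        (mulCLM n ((p.2 j).1 * ((p.2 j).2 : Mat n)) ∘L (invD ((p.2 j).1) ∘L gC n ℓ' j)
          + mulR (((p.2 j).1)⁻¹) ∘L
            (mulCLM n ((p.2 j).1) ∘L yC n ℓ' j
              + mulR (((p.2 j).2 : Mat n)) ∘L gC n ℓ' j)) p :=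
    fun j => ((hg j).matmul (hy j)).matmul (hinv j)
  have hXS := (XC n ℓ' |>.hasFDerivAt (x := p)).matmul ((hA i.castSucc).sub (hA i.succ))
  have htr := (traceCLM n).hasFDerivAt.comp p hXS
  refine ⟨_, htr, fun v => ?_⟩
  rfl

lemma trace_single_mul (A : Mat n) (a b : Fin n) :
    Matrix.trace (A * Matrix.single a b (1:ℂ)) = A b a := by
  simp [Matrix.trace, Matrix.diag, Matrix.mul_apply, Matrix.single,
    Matrix.of_apply, Finset.sum_ite_eq, ite_and]

lemma eq_zero_of_forall_trace_mul_right (M : Mat n) (h : ∀ B, Matrix.trace (M * B) = 0) :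
    M = 0 := by
  ext a b
  have := h (Matrix.single b a 1)
  rwa [trace_single_mul] at this

lemma eq_zero_of_forall_trace_mul_left (M : Mat n) (h : ∀ B, Matrix.trace (B * M) = 0) :
    M = 0 := by
  refine eq_zero_of_forall_trace_mul_right M fun B => ?_
  rw [Matrix.trace_mul_comm]; exact h B

lemma trace_mul_strictUpper (M η : Mat n) (hM : ∀ a b : Fin n, b < a → M a b = 0)
    (hη : ∀ i j : Fin n, j ≤ i → η i j = 0) : Matrix.trace (M * η) = 0 := by
  rw [Matrix.trace]
  refine Finset.sum_eq_zero fun k _ => ?_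
  rw [Matrix.diag_apply, Matrix.mul_apply]
  refine Finset.sum_eq_zero fun m _ => ?_
  rcases le_or_gt k m with hkm | hmk
  · rw [hη m k hkm, mul_zero]
  · rw [hM k m hmk, zero_mul]

lemma tr_h1 (X g y h : Mat n) :
    Matrix.trace (X * (g * y * -(g⁻¹ * h * g⁻¹))) =
      -Matrix.trace ((g⁻¹ * X * (g * y * g⁻¹)) * h) := by
  rw [show X * (g * y * -(g⁻¹ * h * g⁻¹)) = -(((X * (g * y * g⁻¹)) * h) * g⁻¹) by
    noncomm_ring]
  rw [Matrix.trace_neg, Matrix.trace_mul_comm]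
  congr 2
  noncomm_ring

lemma tr_h2 (X g y h : Mat n) :
    Matrix.trace (X * (h * y * g⁻¹)) = Matrix.trace ((y * g⁻¹ * X) * h) := by
  rw [show X * (h * y * g⁻¹) = (X * h) * (y * g⁻¹) by noncomm_ring, Matrix.trace_mul_comm]
  congr 1
  noncomm_ring

lemma tr_eta (X g η : Mat n) :
    Matrix.trace (X * (g * η * g⁻¹)) = Matrix.trace ((g⁻¹ * X * g) * η) := by
  rw [show X * (g * η * g⁻¹) = (X * g * η) * g⁻¹ by noncomm_ring, Matrix.trace_mul_comm]
  congr 1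
  noncomm_ring

lemma dF_trace_zero (X g y η h : Mat n) (hg1 : g * g⁻¹ = 1) (hg2 : g⁻¹ * g = 1)
    (hcomm : X * (g * y * g⁻¹) = (g * y * g⁻¹) * X)
    (hb : ∀ a b : Fin n, b < a → (g⁻¹ * X * g) a b = 0)
    (hη : ∀ i j : Fin n, j ≤ i → η i j = 0) :
    Matrix.trace (X * (g * y * -(g⁻¹ * h * g⁻¹) + (g * η + h * y) * g⁻¹)) = 0 := by
  have hsplit : g * y * -(g⁻¹ * h * g⁻¹) + (g * η + h * y) * g⁻¹
      = g * y * -(g⁻¹ * h * g⁻¹) + (g * η * g⁻¹ + h * y * g⁻¹) := by noncomm_ring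
  rw [hsplit, mul_add, mul_add, Matrix.trace_add, Matrix.trace_add, tr_h1, tr_eta, tr_h2]
  have hyx : g⁻¹ * X * (g * y * g⁻¹) = y * g⁻¹ * X := by
    have h1 : g⁻¹ * X * (g * y * g⁻¹) = g⁻¹ * (X * (g * y * g⁻¹)) := by noncomm_ring
    rw [h1, hcomm, show g⁻¹ * (g * y * g⁻¹ * X) = (g⁻¹ * g) * (y * (g⁻¹ * X)) from by
      noncomm_ring, hg2, one_mul, ← mul_assoc]
  rw [show y * g⁻¹ * X = g⁻¹ * X * (g * y * g⁻¹) from hyx.symm,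
    trace_mul_strictUpper _ _ hb hη]
  ring

lemma comm_extract (X g y : Mat n) (hg1 : g * g⁻¹ = 1) (hg2 : g⁻¹ * g = 1)
    (h0 : ∀ h : Mat n,
      Matrix.trace (X * (g * y * -(g⁻¹ * h * g⁻¹) + h * y * g⁻¹)) = 0) :
    X * (g * y * g⁻¹) = (g * y * g⁻¹) * X := by
  have key : ∀ h : Mat n,
      Matrix.trace ((y * g⁻¹ * X - g⁻¹ * X * (g * y * g⁻¹)) * h) = 0 := by
    intro h
    have := h0 h
    rw [mul_add, Matrix.trace_add, tr_h1, tr_h2] at this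
    rw [sub_mul, Matrix.trace_sub]
    linear_combination this
  have hM : y * g⁻¹ * X - g⁻¹ * X * (g * y * g⁻¹) = 0 :=
    eq_zero_of_forall_trace_mul_right _ key
  have e : y * g⁻¹ * X = g⁻¹ * X * (g * y * g⁻¹) := sub_eq_zero.mp hM
  have e2 : g * (y * g⁻¹ * X) = g * (g⁻¹ * X * (g * y * g⁻¹)) := congrArg (g * ·) e
  rw [show g * (y * g⁻¹ * X) = (g * y * g⁻¹) * X by noncomm_ring,
    show g * (g⁻¹ * X * (g * y * g⁻¹)) = (g * g⁻¹) * (X * (g * y * g⁻¹)) by noncomm_ring,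
    hg1, one_mul] at e2
  exact e2.symm

theorem braid_crit_iff (n ℓ' : ℕ) (p : braidSpace n ℓ')
    (hp : ∀ i : Fin (ℓ' + 2), IsUnit (p.2 i).1) (i : Fin (ℓ' + 1)) :
    fderiv ℂ (braidPotential n ℓ' i) p = 0 ↔
      ∀ v : braidSpace n ℓ',
        Matrix.trace (p.1 *
          (((p.2 i.castSucc).1 * ((p.2 i.castSucc).2 : Mat n) *
              -(((p.2 i.castSucc).1)⁻¹ * (v.2 i.castSucc).1 * ((p.2 i.castSucc).1)⁻¹)
            + ((p.2 i.castSucc).1 * ((v.2 i.castSucc).2 : Mat n)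
                + (v.2 i.castSucc).1 * ((p.2 i.castSucc).2 : Mat n)) * ((p.2 i.castSucc).1)⁻¹)
          - ((p.2 i.succ).1 * ((p.2 i.succ).2 : Mat n) *
              -(((p.2 i.succ).1)⁻¹ * (v.2 i.succ).1 * ((p.2 i.succ).1)⁻¹)
            + ((p.2 i.succ).1 * ((v.2 i.succ).2 : Mat n)
                + (v.2 i.succ).1 * ((p.2 i.succ).2 : Mat n)) * ((p.2 i.succ).1)⁻¹))
          + v.1 *
            ((p.2 i.castSucc).1 * ((p.2 i.castSucc).2 : Mat n) * ((p.2 i.castSucc).1)⁻¹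
              - (p.2 i.succ).1 * ((p.2 i.succ).2 : Mat n) * ((p.2 i.succ).1)⁻¹)) = 0 := by
  obtain ⟨D, hD, hv⟩ := braid_key n ℓ' p hp i
  rw [hD.fderiv]
  constructor
  · intro h v
    rw [← hv v, h]
    rfl
  · intro h
    refine ContinuousLinearMap.ext fun v => ?_
    rw [ContinuousLinearMap.zero_apply, hv v]
    exact h v

end BraidCritical

/-- **The critical locus of the braid potentials.**  At a point `p` with all group matrices
invertible, the Fréchet derivatives of all intermediate potentials `W_{i,i+1}` vanish
simultaneously if and only if: (a) `Ad_{gᵢ}(Yᵢ)` is independent of `i`;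
(b) `(gᵢ⁻¹Xgᵢ)₋₋ = 0` for all `i`; (c) `[X, Ad_{g₁}(Y₁)] = 0`. -/
theorem braid_potential_critical_locus
    (n ℓ' : ℕ) (hn : 1 ≤ n) (p : braidSpace n ℓ')
    (hp : ∀ i : Fin (ℓ' + 2), IsUnit (p.2 i).1) :
    (∀ i : Fin (ℓ' + 1), fderiv ℂ (braidPotential n ℓ' i) p = 0) ↔
      ((∀ i : Fin (ℓ' + 1),
          (p.2 i.castSucc).1 * ((p.2 i.castSucc).2 : Matrix (Fin n) (Fin n) ℂ)
              * ((p.2 i.castSucc).1)⁻¹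
            = (p.2 i.succ).1 * ((p.2 i.succ).2 : Matrix (Fin n) (Fin n) ℂ)
              * ((p.2 i.succ).1)⁻¹) ∧
        (∀ i : Fin (ℓ' + 2), ∀ a b : Fin n, b < a →
          (((p.2 i).1)⁻¹ * p.1 * (p.2 i).1) a b = 0) ∧
        (p.1 * ((p.2 0).1 * ((p.2 0).2 : Matrix (Fin n) (Fin n) ℂ) * ((p.2 0).1)⁻¹)
          = ((p.2 0).1 * ((p.2 0).2 : Matrix (Fin n) (Fin n) ℂ) * ((p.2 0).1)⁻¹) * p.1)) := by
  classical
  have hg1 : ∀ j : Fin (ℓ' + 2), (p.2 j).1 * ((p.2 j).1)⁻¹ = 1 := fun j =>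
    Matrix.mul_nonsing_inv _ ((Matrix.isUnit_iff_isUnit_det _).mp (hp j))
  have hg2 : ∀ j : Fin (ℓ' + 2), ((p.2 j).1)⁻¹ * (p.2 j).1 = 1 := fun j =>
    Matrix.nonsing_inv_mul _ ((Matrix.isUnit_iff_isUnit_det _).mp (hp j))
  have hcrit := BraidCritical.braid_crit_iff n ℓ' p hp
  constructor
  · intro H
    have hφ := fun i => (hcrit i).mp (H i)
    have ha : ∀ i : Fin (ℓ' + 1),
        (p.2 i.castSucc).1 * ((p.2 i.castSucc).2 : Matrix (Fin n) (Fin n) ℂ)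
            * ((p.2 i.castSucc).1)⁻¹
          = (p.2 i.succ).1 * ((p.2 i.succ).2 : Matrix (Fin n) (Fin n) ℂ)
            * ((p.2 i.succ).1)⁻¹ := by
      intro i
      have h := fun ξ : BraidCritical.Mat n => hφ i (ξ, 0)
      simp only [Pi.zero_apply, Prod.fst_zero, Prod.snd_zero, ZeroMemClass.coe_zero,
        mul_zero, zero_mul, neg_zero, add_zero, zero_add, sub_self, sub_zero] at h
      exact sub_eq_zero.mp (BraidCritical.eq_zero_of_forall_trace_mul_left _ h)
    refine ⟨ha, ?_, ?_⟩
    · intro j a b hba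
      have hmem : Matrix.single b a (1:ℂ) ∈ strictUpperSub n := by
        intro i' j' hji'
        simp only [Matrix.single, Matrix.of_apply, ite_eq_right_iff, one_ne_zero,
          imp_false, not_and]
        rintro rfl rfl
        exact absurd hji' (not_le.mpr hba)
      set η : strictUpperSub n := ⟨Matrix.single b a 1, hmem⟩ with hη
      have hcoe : ((η : strictUpperSub n) : Matrix (Fin n) (Fin n) ℂ)
          = Matrix.single b a 1 := rfl
      have hTr : Matrix.trace (p.1 * ((p.2 j).1 * Matrix.single b a 1
          * ((p.2 j).1)⁻¹)) = 0 := by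
        by_cases hj : j = Fin.last (ℓ' + 1)
        · subst hj
          have hne : (Fin.last ℓ').castSucc ≠ Fin.last (ℓ' + 1) :=
            (Fin.castSucc_lt_last _).ne
          have h0 := hφ (Fin.last ℓ')
            (0, Pi.single (Fin.last (ℓ' + 1)) ((0 : BraidCritical.Mat n), η))
          simp only [Fin.succ_last, Pi.single_eq_same, Pi.single_eq_of_ne hne,
            Prod.fst_zero, Prod.snd_zero, ZeroMemClass.coe_zero, mul_zero, zero_mul,
            neg_zero, add_zero, zero_add, sub_zero, zero_sub, mul_neg,
            Matrix.trace_neg, neg_eq_zero, hcoe] at h0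
          exact h0
        · have hcs : (j.castPred hj).castSucc = j := Fin.castSucc_castPred j hj
          have hne : (j.castPred hj).succ ≠ j := by
            intro heq
            have hv := congrArg Fin.val heq
            simp only [Fin.val_succ, Fin.coe_castPred] at hv
            omega
          have h0 := hφ (j.castPred hj)
            (0, Pi.single j ((0 : BraidCritical.Mat n), η))
          rw [hcs] at h0
          simp only [Pi.single_eq_same, Pi.single_eq_of_ne hne,
            Prod.fst_zero, Prod.snd_zero, ZeroMemClass.coe_zero, mul_zero, zero_mul,
            neg_zero, add_zero, zero_add, sub_zero, hcoe] at h0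
          exact h0
      rw [BraidCritical.tr_eta, BraidCritical.trace_single_mul] at hTr
      exact hTr
    · have h0 : ∀ h : BraidCritical.Mat n,
          Matrix.trace (p.1 * ((p.2 0).1 * ((p.2 0).2 : Matrix (Fin n) (Fin n) ℂ)
            * -(((p.2 0).1)⁻¹ * h * ((p.2 0).1)⁻¹)
            + h * ((p.2 0).2 : Matrix (Fin n) (Fin n) ℂ) * ((p.2 0).1)⁻¹)) = 0 := by
        intro h
        have h0 := hφ 0 (0, Pi.single (0 : Fin (ℓ' + 2)) (h, (0 : strictUpperSub n)))
        simp only [Fin.castSucc_zero, Pi.single_eq_same,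
          Pi.single_eq_of_ne (Fin.succ_ne_zero (0 : Fin (ℓ' + 1))),
          Prod.fst_zero, Prod.snd_zero, ZeroMemClass.coe_zero, mul_zero, zero_mul,
          neg_zero, add_zero, zero_add, sub_zero] at h0
        exact h0
      exact BraidCritical.comm_extract p.1 (p.2 0).1 ((p.2 0).2 : Matrix (Fin n) (Fin n) ℂ)
        (hg1 0) (hg2 0) h0
  · rintro ⟨ha, hb, hc⟩ i
    refine (hcrit i).mpr fun v => ?_
    have hchain : ∀ j : Fin (ℓ' + 2),
        (p.2 j).1 * ((p.2 j).2 : Matrix (Fin n) (Fin n) ℂ) * ((p.2 j).1)⁻¹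
          = (p.2 0).1 * ((p.2 0).2 : Matrix (Fin n) (Fin n) ℂ) * ((p.2 0).1)⁻¹ := by
      intro j
      induction j using Fin.induction with
      | zero => rfl
      | succ k ih => rw [← ha k]; exact ih
    have hcomm : ∀ j : Fin (ℓ' + 2),
        p.1 * ((p.2 j).1 * ((p.2 j).2 : Matrix (Fin n) (Fin n) ℂ) * ((p.2 j).1)⁻¹)
          = ((p.2 j).1 * ((p.2 j).2 : Matrix (Fin n) (Fin n) ℂ) * ((p.2 j).1)⁻¹) * p.1 :=
      fun j => by rw [hchain j]; exact hc
    have z : ∀ (j : Fin (ℓ' + 2)) (hm : BraidCritical.Mat n) (ηv : strictUpperSub n),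
        Matrix.trace (p.1 * ((p.2 j).1 * ((p.2 j).2 : Matrix (Fin n) (Fin n) ℂ)
          * -(((p.2 j).1)⁻¹ * hm * ((p.2 j).1)⁻¹)
          + ((p.2 j).1 * (ηv : Matrix (Fin n) (Fin n) ℂ)
              + hm * ((p.2 j).2 : Matrix (Fin n) (Fin n) ℂ)) * ((p.2 j).1)⁻¹)) = 0 :=
      fun j hm ηv => BraidCritical.dF_trace_zero p.1 _ _ _ _ (hg1 j) (hg2 j)
        (hcomm j) (hb j) ηv.2
    rw [ha i, sub_self, mul_zero, add_zero, mul_sub, Matrix.trace_sub,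
      z i.castSucc (v.2 i.castSucc).1 (v.2 i.castSucc).2,
      z i.succ (v.2 i.succ).1 (v.2 i.succ).2, sub_self]

end
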